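/- Three-point descent inequality for Bregman proximal gradient (Lemma 2): under the assumptions that F is convex differentiable, u is Legendre, Lu - F is convex on int(dom u), and the Bregman proximal map T_τ with τ = 1/L is single-valued mapping int(dom u) to itself, for every x ∈ int(dom u) with x⁺ = T_τ(x) and every s ∈ dom u, one has τ(F(x⁺) - F(s)) ≤ D_u(s, x) - D_u(s, x⁺). -/

import Mathlib

open Real

section Aux

open Filter Topology InnerProductSpace

variable {d : ℕ}

set_option maxHeartbeats 1000000 in
/-- First-order gradient inequality for a convex function. -/
lemma convexOn_grad_ineq {s : Set (EuclideanSpace ℝ (Fin d))}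
    {f : EuclideanSpace ℝ (Fin d) → ℝ} {g x y : EuclideanSpace ℝ (Fin d)}
    (hf : ConvexOn ℝ s f) (hx : x ∈ s) (hy : y ∈ s)
    (hd : HasFDerivAt f (InnerProductSpace.toDual ℝ _ g) x) :
    f x + inner ℝ g (y - x) ≤ f y := by
  set φ : ℝ → ℝ := fun t => f (x + t • (y - x)) with hφdef
  have hc : HasDerivAt (fun t : ℝ => x + t • (y - x)) (y - x) 0 := by
    simpa using ((hasDerivAt_id (0 : ℝ)).smul_const (y - x)).const_add x
  have hd' : HasFDerivAt f (InnerProductSpace.toDual ℝ _ g)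
      ((fun t : ℝ => x + t • (y - x)) 0) := by simpa using hd
  have hφ : HasDerivAt φ ((inner ℝ g (y - x) : ℝ)) 0 := by
    exact (by simpa using hd'.comp_hasDerivAt 0 hc :
      HasDerivAt (f ∘ fun t : ℝ => x + t • (y - x)) (inner ℝ g (y - x)) 0)
  have hφ0 : φ 0 = f x := by simp [hφdef]
  have hslope : ∀ t ∈ Set.Ioc (0 : ℝ) 1, slope φ 0 t ≤ f y - f x := by
    intro t ht
    have hmem : x + t • (y - x) = (1 - t) • x + t • y := by module
    have hcv : f ((1 - t) • x + t • y) ≤ (1 - t) * f x + t * f y :=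
      hf.2 hx hy (by linarith [ht.2]) ht.1.le (by ring)
    have hφt : φ t ≤ (1 - t) * f x + t * f y := by
      rw [hφdef]; simpa [hmem] using hcv
    rw [slope_def_field]
    rw [div_le_iff₀ (by simpa using ht.1)]
    simp only [hφ0]
    linarith
  have htend : Tendsto (slope φ 0) (𝓝[>] (0 : ℝ)) (𝓝 (inner ℝ g (y - x) : ℝ)) :=
    (hasDerivAt_iff_tendsto_slope.mp hφ).mono_left
      (nhdsWithin_mono _ fun t ht => Set.mem_compl_singleton_iff.mpr (ne_of_gt ht))
  have hmem01 : Set.Ioc (0 : ℝ) 1 ∈ 𝓝[>] (0 : ℝ) :=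
    Ioc_mem_nhdsGT_of_mem ⟨le_refl 0, zero_lt_one⟩
  have hfinal : (inner ℝ g (y - x) : ℝ) ≤ f y - f x :=
    le_of_tendsto htend (Filter.eventually_of_mem hmem01 hslope)
  linarith

end Aux

set_option maxHeartbeats 1000000 in
/-- Three-point descent inequality for the Bregman proximal gradient step (Lemma 2):
with dom u = s, F convex and differentiable on int s with gradient F', u of Legendre type
(strictly convex on int s, differentiable there with gradient u'), Lu - F convex on int s,
τ = 1/L, and T the single-valued Bregman proximal map sending int s to itself, one has
τ(F(x⁺) - F(s')) ≤ D_u(s', x) - D_u(s', x⁺) for all x ∈ int s and s' ∈ s, x⁺ = T x. -/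

theorem bregman_proximal_three_point_descent {d : ℕ}
    (s : Set (EuclideanSpace ℝ (Fin d)))
    (F u : EuclideanSpace ℝ (Fin d) → ℝ)
    (F' u' : EuclideanSpace ℝ (Fin d) → EuclideanSpace ℝ (Fin d))
    (T : EuclideanSpace ℝ (Fin d) → EuclideanSpace ℝ (Fin d))
    (L τ : ℝ) (hL : 0 < L) (hτ : τ = 1 / L)
    (hsconv : Convex ℝ s)
    (hFconv : ConvexOn ℝ s F)
    (hFdiff : ∀ y ∈ interior s, HasGradientAt F (F' y) y)
    (hustrict : StrictConvexOn ℝ (interior s) u)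
    (hudiff : ∀ y ∈ interior s, HasGradientAt u (u' y) y)
    (hrelsmooth : ConvexOn ℝ (interior s) (fun x => L * u x - F x))
    (hTmem : ∀ y ∈ interior s, T y ∈ interior s)
    (hTmin : ∀ y ∈ interior s,
      IsMinOn (fun x => (inner ℝ (F' y) (x - y) : ℝ)
        + (1 / τ) * (u x - u y - inner ℝ (u' y) (x - y))) s (T y))
    (hTuniq : ∀ y ∈ interior s, ∀ z ∈ s,
      IsMinOn (fun x => (inner ℝ (F' y) (x - y) : ℝ)
        + (1 / τ) * (u x - u y - inner ℝ (u' y) (x - y))) s z → z = T y) :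
    ∀ x ∈ interior s, ∀ s' ∈ s,
      τ * (F (T x) - F s')
        ≤ (u s' - u x - inner ℝ (u' x) (s' - x))
          - (u s' - u (T x) - inner ℝ (u' (T x)) (s' - T x)) := by
  intro x hx s' hs'
  have hτ0 : (0 : ℝ) < τ := by rw [hτ]; positivity
  have hτL : τ * L = 1 := by rw [hτ]; field_simp
  set xp := T x with hxpdef
  have hxp : xp ∈ interior s := hTmem x hx
  -- derivatives as Fréchet derivatives
  have hFx : HasFDerivAt F (InnerProductSpace.toDual ℝ _ (F' x)) x :=
    hasGradientAt_iff_hasFDerivAt.mp (hFdiff x hx)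
  have hux : HasFDerivAt u (InnerProductSpace.toDual ℝ _ (u' x)) x :=
    hasGradientAt_iff_hasFDerivAt.mp (hudiff x hx)
  have huxp : HasFDerivAt u (InnerProductSpace.toDual ℝ _ (u' xp)) xp :=
    hasGradientAt_iff_hasFDerivAt.mp (hudiff xp hxp)
  -- derivative of the affine inner-product terms
  have hlin : ∀ (g z : EuclideanSpace ℝ (Fin d)),
      HasFDerivAt (fun w => (inner ℝ g (w - x) : ℝ)) (InnerProductSpace.toDual ℝ _ g) z := by
    intro g z
    have h1 : HasFDerivAt (fun w => (InnerProductSpace.toDual ℝ _ g) w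
        - (InnerProductSpace.toDual ℝ _ g) x) (InnerProductSpace.toDual ℝ _ g) z :=
      ((InnerProductSpace.toDual ℝ _ g).hasFDerivAt).sub_const _
    have h2 : (fun w => (inner ℝ g (w - x) : ℝ))
        = fun w => (InnerProductSpace.toDual ℝ _ g) w - (InnerProductSpace.toDual ℝ _ g) x := by
      funext w; simp [inner_sub_right]
    rw [h2]; exact h1
  -- derivative of the prox objective at xp
  have hφder : HasFDerivAt (fun w => (inner ℝ (F' x) (w - x) : ℝ)
      + (1 / τ) * (u w - u x - inner ℝ (u' x) (w - x)))
      (InnerProductSpace.toDual ℝ _ (F' x)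
        + (1 / τ) • (InnerProductSpace.toDual ℝ _ (u' xp)
          - InnerProductSpace.toDual ℝ _ (u' x))) xp := by
    exact (hlin (F' x) xp).add
      ((((huxp.sub_const (u x)).sub (hlin (u' x) xp)).const_mul (1 / τ)))
  -- stationarity at the interior minimizer
  have hmin : IsMinOn (fun w => (inner ℝ (F' x) (w - x) : ℝ)
      + (1 / τ) * (u w - u x - inner ℝ (u' x) (w - x))) s xp := hTmin x hx
  have hloc : IsLocalMin (fun w => (inner ℝ (F' x) (w - x) : ℝ)
      + (1 / τ) * (u w - u x - inner ℝ (u' x) (w - x))) xp :=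
    hmin.isLocalMin (mem_interior_iff_mem_nhds.mp hxp)
  have hD0 := hloc.hasFDerivAt_eq_zero hφder
  have hkey : F' x + (1 / τ) • (u' xp - u' x) = 0 := by
    have h0 : (InnerProductSpace.toDual ℝ (EuclideanSpace ℝ (Fin d)))
        (F' x + (1 / τ) • (u' xp - u' x)) = 0 := by
      rw [map_add, map_smul, map_sub]; exact hD0
    exact (InnerProductSpace.toDual ℝ (EuclideanSpace ℝ (Fin d))).map_eq_zero_iff.mp h0
  have h1 : (1 / τ) • (u' xp - u' x) = -F' x := eq_neg_of_add_eq_zero_right hkey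
  have hvec : u' xp - u' x = (-τ) • F' x := by
    have h2 : τ • ((1 / τ) • (u' xp - u' x)) = τ • (-F' x) := congrArg _ h1
    rw [smul_smul, mul_one_div, div_self hτ0.ne', one_smul] at h2
    rw [h2, neg_smul, smul_neg]
  -- inner product expansions
  have ep : (inner ℝ (F' x) (s' - xp) : ℝ)
      = inner ℝ (F' x) (s' - x) - inner ℝ (F' x) (xp - x) := by
    rw [show s' - xp = (s' - x) - (xp - x) by abel, inner_sub_right]
  have eq3 : (inner ℝ (u' xp) (s' - xp) : ℝ) - inner ℝ (u' x) (s' - xp)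
      = -τ * ((inner ℝ (F' x) (s' - x) : ℝ) - inner ℝ (F' x) (xp - x)) := by
    rw [← inner_sub_left, hvec, real_inner_smul_left, ep]
  have equ : (inner ℝ (u' x) (s' - xp) : ℝ)
      = inner ℝ (u' x) (s' - x) - inner ℝ (u' x) (xp - x) := by
    rw [show s' - xp = (s' - x) - (xp - x) by abel, inner_sub_right]
  -- convexity inequality for F : F x + ⟨F' x, s' - x⟩ ≤ F s'
  have hB : F x + (inner ℝ (F' x) (s' - x) : ℝ) ≤ F s' :=
    convexOn_grad_ineq hFconv (interior_subset hx) hs' hFx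
  -- relative smoothness inequality at (x, xp)
  have hAder : HasFDerivAt (fun z => L * u z - F z)
      (InnerProductSpace.toDual ℝ _ (L • u' x - F' x)) x := by
    have := (hux.const_mul L).sub hFx
    rw [map_sub, map_smul]; exact this
  have hA : (L * u x - F x) + (inner ℝ (L • u' x - F' x) (xp - x) : ℝ)
      ≤ L * u xp - F xp :=
    convexOn_grad_ineq hrelsmooth hx hxp hAder
  have hA' : (L * u x - F x)
      + (L * (inner ℝ (u' x) (xp - x) : ℝ) - inner ℝ (F' x) (xp - x))
      ≤ L * u xp - F xp := by
    rwa [inner_sub_left, real_inner_smul_left] at hA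
  -- multiply the smoothness inequality by τ
  have hA2 : τ * (F xp - F x - (inner ℝ (F' x) (xp - x) : ℝ))
      ≤ u xp - u x - inner ℝ (u' x) (xp - x) := by
    have h3 : F xp - F x - (inner ℝ (F' x) (xp - x) : ℝ)
        ≤ L * (u xp - u x - inner ℝ (u' x) (xp - x)) := by linarith [hA']
    have h4 := mul_le_mul_of_nonneg_left h3 hτ0.le
    rw [← mul_assoc, hτL, one_mul] at h4
    exact h4
  have hB2 : τ * (F x + (inner ℝ (F' x) (s' - x) : ℝ)) ≤ τ * F s' :=
    mul_le_mul_of_nonneg_left hB hτ0.le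
  linarith [hA2, hB2, eq3, equ]
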